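/- arXiv:2402.11544 — 3 statements merged into one kernel-verified Lean document; each statement's English description precedes it below -/
import Mathlib

section
/- Let q be a prime power, n ≥ 2, and e ≥ 1 with gcd(e, n·φ(n)) = 1, where φ is Euler's totient function. Then n_q = n_{q^e}. -/
/-- `NqSpec n q m` says that `m` is the Couveignes–Lercier integer `n_q`: for every prime
`ℓ`, (i) `v_ℓ(m) = v_ℓ(n)` if `ℓ` is coprime to `q - 1`; (ii) `v_ℓ(m) = 0` if `v_ℓ(n) = 0`;
(iii) `v_ℓ(m) = max (2 * v_ℓ(q-1) + 1) (2 * v_ℓ(n))` if `ℓ` divides both `q - 1` and `n`. -/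
def NqSpec (n q m : ℕ) : Prop :=
  ∀ ℓ : ℕ, ℓ.Prime →
    (Nat.Coprime ℓ (q - 1) → m.factorization ℓ = n.factorization ℓ) ∧
    (n.factorization ℓ = 0 → m.factorization ℓ = 0) ∧
    (ℓ ∣ (q - 1) → ℓ ∣ n →
      m.factorization ℓ = max (2 * (q - 1).factorization ℓ + 1) (2 * n.factorization ℓ))

/-- Key lemma: if `ℓ` is a prime dividing `n` and `gcd (e, n * φ n) = 1`, then
`v_ℓ(q^e - 1) = v_ℓ(q - 1)`. -/
lemma key_val_eq (n q e : ℕ) (hq : 2 ≤ q) (he : 1 ≤ e) (hn : 2 ≤ n)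
    (hcop : Nat.gcd e (n * Nat.totient n) = 1)
    (ℓ : ℕ) (hℓ : ℓ.Prime) (hℓn : ℓ ∣ n) :
    (q ^ e - 1).factorization ℓ = (q - 1).factorization ℓ := by
  haveI := Fact.mk hℓ
  have hq1 : 1 ≤ q := le_trans one_le_two hq
  have hqe1 : 1 ≤ q ^ e := Nat.one_le_pow _ _ (lt_of_lt_of_le zero_lt_one hq1)
  have hcop' : Nat.Coprime e (n * Nat.totient n) := hcop
  have hℓe : ¬ ℓ ∣ e := by
    intro h
    have h2 : ℓ ∣ Nat.gcd e (n * Nat.totient n) :=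
      Nat.dvd_gcd h (Dvd.dvd.mul_right hℓn _)
    rw [hcop] at h2
    exact Nat.Prime.one_lt hℓ |>.ne' (Nat.dvd_one.mp h2)
  by_cases hdvd : ℓ ∣ q - 1
  · -- q ≡ 1 mod ℓ: q^e - 1 = (q-1) * S with ℓ ∤ S
    set S := ∑ i ∈ Finset.range e, q ^ i with hS
    have hfact : q ^ e - 1 = (q - 1) * S := by
      have hz : ((q : ℤ) - 1) * (S : ℤ) = (q : ℤ) ^ e - 1 := by
        rw [hS]; push_cast; exact mul_geom_sum _ _
      zify [hq1, hqe1]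
      linarith [hz]
    have hq_mod : (q : ZMod ℓ) = 1 := by
      have : ((q - 1 : ℕ) : ZMod ℓ) = 0 := (ZMod.natCast_eq_zero_iff _ _).mpr hdvd
      have h2 : ((q - 1 : ℕ) : ZMod ℓ) = (q : ZMod ℓ) - 1 := by
        push_cast [hq1]; ring
      rw [h2] at this
      linear_combination this
    have hSmod : ((S : ℕ) : ZMod ℓ) = (e : ZMod ℓ) := by
      rw [hS]; push_cast [hq_mod]; simp
    have hSℓ : ¬ ℓ ∣ S := by
      intro h
      have h0 : ((S : ℕ) : ZMod ℓ) = 0 := (ZMod.natCast_eq_zero_iff _ _).mpr h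
      rw [hSmod] at h0
      exact hℓe ((ZMod.natCast_eq_zero_iff _ _).mp h0)
    have hq1ne : q - 1 ≠ 0 := by omega
    have hSne : S ≠ 0 := by
      have : 0 < S :=
        Finset.sum_pos (fun i _ => pow_pos (by omega) i) (Finset.nonempty_range_iff.mpr (by omega))
      omega
    rw [hfact, Nat.factorization_mul hq1ne hSne]
    simp [Nat.factorization_eq_zero_of_not_dvd hSℓ]
  · -- ℓ ∤ q - 1: show ℓ ∤ q^e - 1, so both sides are 0
    have hdvd' : ¬ ℓ ∣ q ^ e - 1 := by
      intro h
      have hqe_mod : ((q : ZMod ℓ)) ^ e = 1 := by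
        have h0 : ((q ^ e - 1 : ℕ) : ZMod ℓ) = 0 := (ZMod.natCast_eq_zero_iff _ _).mpr h
        have h2 : ((q ^ e - 1 : ℕ) : ZMod ℓ) = (q : ZMod ℓ) ^ e - 1 := by
          push_cast [hqe1]; ring
        rw [h2] at h0
        linear_combination h0
      have hqne : (q : ZMod ℓ) ≠ 0 := by
        intro h0
        rw [h0, zero_pow (by omega : e ≠ 0)] at hqe_mod
        exact one_ne_zero hqe_mod.symm
      have hord_e : orderOf (q : ZMod ℓ) ∣ e := orderOf_dvd_of_pow_eq_one hqe_mod
      have hord_p : orderOf (q : ZMod ℓ) ∣ ℓ - 1 :=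
        orderOf_dvd_of_pow_eq_one (ZMod.pow_card_sub_one_eq_one hqne)
      have hcop_el : Nat.Coprime e (ℓ - 1) := by
        apply Nat.Coprime.coprime_dvd_right _ hcop'
        have h1 : ℓ - 1 ∣ Nat.totient n := by
          rw [← Nat.totient_prime hℓ]
          exact Nat.totient_dvd_of_dvd hℓn
        exact h1.trans (dvd_mul_left _ _)
      have hord1 : orderOf (q : ZMod ℓ) = 1 :=
        Nat.dvd_one.mp (hcop_el ▸ Nat.dvd_gcd hord_e hord_p)
      have hq_eq1 : (q : ZMod ℓ) = 1 := orderOf_eq_one_iff.mp hord1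
      apply hdvd
      have : ((q - 1 : ℕ) : ZMod ℓ) = 0 := by
        push_cast [hq1]
        rw [hq_eq1]; ring
      exact (ZMod.natCast_eq_zero_iff _ _).mp this
    rw [Nat.factorization_eq_zero_of_not_dvd hdvd',
        Nat.factorization_eq_zero_of_not_dvd hdvd]

/-- If `q` is a prime power, `n ≥ 2`, `e ≥ 1` and `e` is coprime to `n * φ(n)`,
then `n_q = n_{q^e}`. -/
theorem stmt_7 (n q e m m' : ℕ) (hq : IsPrimePow q) (hn : 2 ≤ n) (he : 1 ≤ e)
    (hcop : Nat.gcd e (n * Nat.totient n) = 1)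
    (hm : 0 < m) (hspec : NqSpec n q m)
    (hm' : 0 < m') (hspec' : NqSpec n (q ^ e) m') : m = m' := by
  have hq2 : 2 ≤ q := hq.two_le
  have hq1 : 1 ≤ q := by omega
  have hqe1 : 1 ≤ q ^ e := Nat.one_le_pow _ _ (by omega)
  have hq1ne : q - 1 ≠ 0 := by omega
  have hqe2 : 2 ≤ q ^ e := le_trans hq2 (Nat.le_self_pow (by omega) q)
  have hqe1ne : q ^ e - 1 ≠ 0 := by omega
  have hn0 : n ≠ 0 := by omega
  apply Nat.factorization_inj (by simpa using hm.ne') (by simpa using hm'.ne')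
  ext ℓ
  by_cases hℓ : ℓ.Prime
  · obtain ⟨h1, h2, h3⟩ := hspec ℓ hℓ
    obtain ⟨h1', h2', h3'⟩ := hspec' ℓ hℓ
    by_cases hℓn : ℓ ∣ n
    · have hkey : (q ^ e - 1).factorization ℓ = (q - 1).factorization ℓ :=
        key_val_eq n q e hq2 he hn hcop ℓ hℓ hℓn
      by_cases hdvd : ℓ ∣ q - 1
      · have hdvd' : ℓ ∣ q ^ e - 1 := by
          by_contra hc
          have := Nat.factorization_eq_zero_of_not_dvd hc
          rw [hkey] at this
          exact absurd (hℓ.factorization_pos_of_dvd hq1ne hdvd) (by omega)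
        rw [h3 hdvd hℓn, h3' hdvd' hℓn, hkey]
      · have hdvd' : ¬ ℓ ∣ q ^ e - 1 := by
          intro hc
          have := hℓ.factorization_pos_of_dvd hqe1ne hc
          rw [hkey, Nat.factorization_eq_zero_of_not_dvd hdvd] at this
          omega
        rw [h1 (hℓ.coprime_iff_not_dvd.mpr hdvd), h1' (hℓ.coprime_iff_not_dvd.mpr hdvd')]
    · have hz : n.factorization ℓ = 0 := Nat.factorization_eq_zero_of_not_dvd hℓn
      rw [h2 hz, h2' hz]
  · rw [Nat.factorization_eq_zero_of_not_prime _ hℓ,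
        Nat.factorization_eq_zero_of_not_prime _ hℓ]
end

section
/- Let n be a positive integer with 8 | n. Then for every positive integer k such that r = nk + 1 is prime, the subgroup of (Z/rZ)* generated by 2 together with the unique subgroup of order k does not equal all of (Z/rZ)*. Equivalently, no Gauss period of type (n,k) generates a normal basis of F_{2^n} over F_2. -/
/-- If `8 ∣ n`, then for every `k > 0` such that `r = n*k + 1` is prime, the subgroup of
`(ℤ/rℤ)ˣ` generated by `2` together with the unique subgroup of order `k`
(namely `{x | x ^ k = 1}`) is not all of `(ℤ/rℤ)ˣ`; equivalently, no Gauss period of type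
`(n, k)` generates a normal basis of `F_{2^n}` over `F_2`. -/
theorem stmt_18 (n : ℕ) (hn : 0 < n) (h8 : 8 ∣ n) :
    ∀ k : ℕ, 0 < k → Nat.Prime (n * k + 1) →
      ∀ u : (ZMod (n * k + 1))ˣ, (u : ZMod (n * k + 1)) = 2 →
        Subgroup.closure (insert u {x : (ZMod (n * k + 1))ˣ | x ^ k = 1}) ≠ ⊤ := by
  intro k hk hp u hu hcl
  haveI : Fact (Nat.Prime (n * k + 1)) := ⟨hp⟩
  obtain ⟨n', hn'⟩ := h8
  obtain ⟨n2, hn2'⟩ : 2 ∣ n := ⟨4 * n', by omega⟩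
  have hkle : k ≤ n * k := Nat.le_mul_of_pos_left k hn
  have hr8 : (n * k + 1) % 8 = 1 := by
    obtain ⟨c, hc⟩ : 8 ∣ n * k := ⟨n' * k, by rw [hn']; ring⟩
    omega
  have hrne2 : n * k + 1 ≠ 2 := by
    have : 8 ≤ n := by omega
    have : 8 ≤ n * k := le_trans this (Nat.le_mul_of_pos_right n hk)
    omega
  have hmk : n2 * k = (n * k + 1) / 2 := by
    have : n * k = 2 * (n2 * k) := by rw [hn2']; ring
    omega
  -- 2 is a square mod r
  have hsq : IsSquare (2 : ZMod (n * k + 1)) := by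
    rw [ZMod.exists_sq_eq_two_iff hrne2]; exact Or.inl hr8
  -- hence u ^ (n2 * k) = 1
  have hum : u ^ (n2 * k) = 1 := by
    rw [hmk, ← ZMod.euler_criterion_units]
    obtain ⟨c, hc⟩ := hsq
    have hcne : c ≠ 0 := by
      intro h
      apply u.ne_zero
      rw [hu, hc, h, mul_zero]
    refine ⟨Units.mk0 c hcne, Units.ext ?_⟩
    rw [Units.val_pow_eq_pow_val, Units.val_mk0, hu, hc, sq]
  -- every element of the set has its (n2 * k)-th power equal to 1
  have hker : Subgroup.closure (insert u {x : (ZMod (n * k + 1))ˣ | x ^ k = 1}) ≤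
      (powMonoidHom (n2 * k) : (ZMod (n * k + 1))ˣ →* (ZMod (n * k + 1))ˣ).ker := by
    rw [Subgroup.closure_le]
    rintro x (rfl | hx)
    · exact hum
    · show x ^ (n2 * k) = 1
      rw [mul_comm n2 k, pow_mul, hx, one_pow]
  rw [hcl, top_le_iff] at hker
  -- get a generator of (ZMod r)ˣ
  obtain ⟨g, hg⟩ := IsCyclic.exists_generator (α := (ZMod (n * k + 1))ˣ)
  have hord : orderOf g = (n * k + 1) - 1 := by
    rw [orderOf_eq_card_of_forall_mem_zpowers hg, Nat.card_eq_fintype_card, ZMod.card_units]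
  have hgm : g ^ (n2 * k) = 1 := hker.ge (Subgroup.mem_top g)
  have hdvd : orderOf g ∣ n2 * k := orderOf_dvd_of_pow_eq_one hgm
  rw [hord] at hdvd
  have hmpos : 0 < n2 * k := by
    have h2 : 0 < n2 := by omega
    exact Nat.mul_pos h2 hk
  have hle := Nat.le_of_dvd hmpos hdvd
  have : n * k = 2 * (n2 * k) := by rw [hn2']; ring
  omega
end

section
/- Let E be an elliptic curve over F_q, t ∈ E(F_q) a point of order n, H = E/⟨t⟩ with quotient isogeny I : E → H, and a ∈ H(F_q) a point whose fiber I^{-1}(a) is irreducible over F_q (i.e., Frobenius acts transitively on the n geometric points of the fiber). Then for any b ∈ I^{-1}(a), the field F_q(b) is a cyclic extension of F_q of degree n, and translation by t permutes the fiber, realizing the Galois action: the conjugates of b are exactly b + jt for 0 ≤ j ≤ n-1. -/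
/-- Abstract formalization of Couveignes–Lercier: `G = E(closure of F_q)` and
`H = (E/⟨t⟩)(closure)` are abelian groups with Frobenius automorphisms `σG`, `σH`
(generating the Galois action), and `I : G → H` is the quotient isogeny, equivariant for
Frobenius, with kernel the cyclic group `⟨t⟩` of order `n` generated by the rational
(Frobenius-fixed) point `t`. Let `a` be a rational point of `H` whose fiber `I⁻¹(a)` is
irreducible over `F_q`, i.e. Frobenius acts transitively on it. Then for `b ∈ I⁻¹(a)`,
the field `F_q(b)` is a cyclic extension of `F_q` of degree `n` — i.e. the Frobenius
orbit of `b` has exact length `n` — and translation by `t` realizes the Galois action: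
the conjugates of `b` (the points of the fiber) are exactly `b + j • t`, `0 ≤ j ≤ n-1`. -/
theorem stmt_19 {G H : Type*} [AddCommGroup G] [AddCommGroup H]
    (σG : G ≃+ G) (σH : H ≃+ H) (I : G →+ H)
    (hIσ : ∀ x : G, I (σG x) = σH (I x))
    (n : ℕ) (hn : 0 < n) (t : G) (ht : addOrderOf t = n) (htσ : σG t = t)
    (hker : I.ker = AddSubgroup.zmultiples t)
    (a : H) (ha : σH a = a) (b : G) (hb : I b = a)
    (hirr : ∀ c : G, I c = a → ∃ j : ℕ, (⇑σG)^[j] b = c) :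
    Function.minimalPeriod (⇑σG) b = n ∧
      (∀ c : G, I c = a ↔ ∃ j : ℕ, j < n ∧ c = b + j • t) := by
  have hIt : I t = 0 := by
    have h : t ∈ I.ker := by
      rw [hker]; exact AddSubgroup.mem_zmultiples t
    exact h
  have hntz : n • t = 0 := by rw [← ht]; exact addOrderOf_nsmul_eq_zero t
  have hntz' : (n : ℤ) • t = 0 := by rw [natCast_zsmul]; exact hntz
  set d := σG b - b with hd
  have hId : I d = 0 := by
    rw [hd, map_sub, hIσ, hb, ha, sub_self]
  have hdker : d ∈ AddSubgroup.zmultiples t := by rw [← hker]; exact hId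
  obtain ⟨m, hm⟩ := hdker
  have hσd : σG d = d := by
    rw [← hm, map_zsmul, htσ]
  have hiter : ∀ j : ℕ, (⇑σG)^[j] b = b + (j : ℤ) • d := by
    intro j
    induction j with
    | zero => simp
    | succ k ih =>
      rw [Function.iterate_succ_apply', ih, map_add, map_zsmul, hσd]
      have hσb : σG b = b + d := by rw [hd]; abel
      rw [hσb]
      push_cast
      rw [add_smul, one_smul]
      abel
  -- t is in the Frobenius orbit of the fiber
  have hbt : I (b + t) = a := by rw [map_add, hb, hIt, add_zero]
  obtain ⟨j₀, hj₀⟩ := hirr (b + t) hbt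
  rw [hiter j₀] at hj₀
  have hj₀' : (j₀ : ℤ) • d = t := by
    have := hj₀
    exact add_left_cancel this
  -- key: any natural period of b is divisible by n
  have hkey : ∀ k : ℕ, (⇑σG)^[k] b = b → n ∣ k := by
    intro k hk
    rw [hiter k] at hk
    have hkd : (k : ℤ) • d = 0 := by
      have := hk
      have h2 : b + (k : ℤ) • d = b + 0 := by rw [this, add_zero]
      exact add_left_cancel h2
    have hkt : (k : ℤ) • t = 0 := by
      rw [← hj₀', smul_comm, hkd, smul_zero]
    have : k • t = 0 := by rwa [natCast_zsmul] at hkt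
    rw [← ht]
    exact addOrderOf_dvd_of_nsmul_eq_zero this
  have hper : Function.IsPeriodicPt (⇑σG) n b := by
    show (⇑σG)^[n] b = b
    rw [hiter n, ← hm, smul_comm, hntz', smul_zero, add_zero]
  have hdvd1 : Function.minimalPeriod (⇑σG) b ∣ n := hper.minimalPeriod_dvd
  have hdvd2 : n ∣ Function.minimalPeriod (⇑σG) b :=
    hkey _ (Function.iterate_minimalPeriod)
  constructor
  · exact Nat.dvd_antisymm hdvd1 hdvd2
  · intro c
    constructor
    · intro hc
      have hcb : c - b ∈ I.ker := by
        show I (c - b) = 0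
        rw [map_sub, hc, hb, sub_self]
      rw [hker] at hcb
      obtain ⟨z, hz⟩ := hcb
      have hnn : (0 : ℤ) ≤ z % n := Int.emod_nonneg z (by exact_mod_cast hn.ne')
      have hlt : z % n < n := Int.emod_lt_of_pos z (by exact_mod_cast hn)
      refine ⟨(z % n).toNat, ?_, ?_⟩
      · have : ((z % n).toNat : ℤ) < n := by rwa [Int.toNat_of_nonneg hnn]
        exact_mod_cast this
      · have hzt : z • t = ((z % n).toNat) • t := by
          conv_lhs => rw [← Int.emod_add_mul_ediv z n]
          rw [add_smul, mul_comm, mul_smul, hntz', smul_zero, add_zero,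
            ← Int.toNat_of_nonneg hnn, natCast_zsmul, Int.toNat_natCast]
        simp only at hz
        have : c = b + z • t := by rw [hz]; abel
        rw [this, hzt]
    · rintro ⟨j, _, rfl⟩
      rw [map_add, map_nsmul, hIt, smul_zero, add_zero, hb]
end
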